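/- Let Γ be a finite simplicial graph with no SIL whose vertices are labeled by nontrivial cyclic groups and let G_Γ be the associated graph product. Then the assignment p_{v,C} ↦ π_{v,C} extends to a surjective group homomorphism φ: G_{Γ̃} → Aut^pc(G_Γ). -/

import Mathlib

open Monoid

namespace ArXiv

universe u uG

variable {V : Type u}

/-- The star of a vertex: the vertex together with its neighbors. -/
def star (Γ : SimpleGraph V) (v : V) : Set V := insert v (Γ.neighborSet v)

/-- `C ⊆ V` is the vertex set of a connected component of the full subgraph of `Γ`
induced on `S`. -/
def IsCompOf (Γ : SimpleGraph V) (S : Set V) (C : Set V) : Prop :=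
  ∃ c : (Γ.induce S).ConnectedComponent, C = Subtype.val '' c.supp

/-- `Γ` has a separating intersection of links: there are distinct non-adjacent vertices
`v, w` such that some connected component of `Γ ∖ (lk(v) ∩ lk(w))` contains neither `v`
nor `w`. -/
def HasSIL (Γ : SimpleGraph V) : Prop :=
  ∃ v w : V, v ≠ w ∧ ¬ Γ.Adj v w ∧
    ∃ C : Set V, IsCompOf Γ ((Γ.neighborSet v ∩ Γ.neighborSet w)ᶜ) C ∧ v ∉ C ∧ w ∉ C

variable (Γ : SimpleGraph V) (G : V → Type uG) [∀ v, Group (G v)]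

/-- The commutator relators defining the graph product. -/
def rels : Set (Monoid.CoprodI G) :=
  {x | ∃ (v w : V) (_ : Γ.Adj v w) (g : G v) (h : G w),
    x = CoprodI.of g * CoprodI.of h * (CoprodI.of g)⁻¹ * (CoprodI.of h)⁻¹}

/-- The graph product of the vertex groups `G v` over the graph `Γ`: the quotient of the
free product by the normal closure of the commutators of adjacent vertex groups. -/
def GraphProduct : Type (max u uG) :=
  Monoid.CoprodI G ⧸ Subgroup.normalClosure (rels Γ G)

instance : Group (GraphProduct Γ G) :=
  inferInstanceAs (Group (Monoid.CoprodI G ⧸ Subgroup.normalClosure (rels Γ G)))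

/-- The canonical map from a vertex group into the graph product. -/
def of {v : V} : G v →* GraphProduct Γ G :=
  (QuotientGroup.mk' (Subgroup.normalClosure (rels Γ G))).comp CoprodI.of

theorem of_commute {v w : V} (h : Γ.Adj v w) (g : G v) (k : G w) :
    Commute (of Γ G g) (of Γ G k) := by
  rw [← commutatorElement_eq_one_iff_commute]
  have hmem : (CoprodI.of g * CoprodI.of k * (CoprodI.of g)⁻¹ * (CoprodI.of k)⁻¹ :
      Monoid.CoprodI G) ∈ Subgroup.normalClosure (rels Γ G) :=
    Subgroup.subset_normalClosure ⟨v, w, h, g, k, rfl⟩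
  have h1 : (QuotientGroup.mk' (Subgroup.normalClosure (rels Γ G)))
      (CoprodI.of g * CoprodI.of k * (CoprodI.of g)⁻¹ * (CoprodI.of k)⁻¹) = 1 :=
    (QuotientGroup.eq_one_iff _).mpr hmem
  simp only [map_mul, map_inv] at h1
  rw [commutatorElement_def]
  exact h1

/-- `π` is the partial conjugation `π_{v,C}`, for vertex groups with chosen generators
`gen`: it conjugates the generators in `C` by (the generator of) `v` and fixes all other
generators. -/
def IsPartialConj (gen : ∀ v, G v) (π : MulAut (GraphProduct Γ G)) (v : V) (C : Set V) :
    Prop :=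
  (∀ u ∈ C, ∀ g : G u, π (of Γ G g) = of Γ G (gen v) * of Γ G g * (of Γ G (gen v))⁻¹) ∧
  (∀ u ∉ C, ∀ g : G u, π (of Γ G g) = of Γ G g)

/-- `π` is the partial conjugation `π_{a,C}` by the element `a` of the vertex group `G v`:
it conjugates the vertex groups in `C` by `a` and fixes all other vertex groups. -/
def IsPartialConjBy {v : V} (a : G v) (π : MulAut (GraphProduct Γ G)) (C : Set V) : Prop :=
  (∀ u ∈ C, ∀ g : G u, π (of Γ G g) = of Γ G a * of Γ G g * (of Γ G a)⁻¹) ∧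
  (∀ u ∉ C, ∀ g : G u, π (of Γ G g) = of Γ G g)

/-- The vertex set of the graph `Γ̃`: pairs `p_{v,C}` where `C` is a connected component
of `Γ ∖ st(v)`. -/
def TV : Type u := {p : V × Set V // IsCompOf Γ ((star Γ p.1)ᶜ) p.2}

/-- The graph `Γ̃`: vertices `p_{v,C}` and `p_{w,D}` are joined by an edge unless
`v, w` are distinct non-adjacent vertices with `v ∈ D` and `w ∈ C`. -/
def tilde : SimpleGraph (TV Γ) where
  Adj p q := p ≠ q ∧
    ¬(p.1.1 ≠ q.1.1 ∧ ¬ Γ.Adj p.1.1 q.1.1 ∧ p.1.1 ∈ q.1.2 ∧ q.1.1 ∈ p.1.2)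
  symm := ⟨by
    rintro p q ⟨h1, h2⟩
    exact ⟨h1.symm, fun ⟨a, b, c, d⟩ => h2 ⟨a.symm, fun e => b e.symm, d, c⟩⟩⟩
  loopless := ⟨fun p h => h.1 rfl⟩

/-- The graph product `G_{Γ̃}`, where the vertex `p_{v,C}` is labeled by (a copy of) the
group `G v`. -/
abbrev TildeProduct : Type (max u uG) :=
  GraphProduct (tilde Γ) (fun p : TV Γ => G p.1.1)

/-- The element `p_v = ∏_C p_{v,C} ∈ G_{Γ̃}`, the product over all connected components
`C` of `Γ ∖ st(v)` (the factors pairwise commute). -/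
noncomputable def pvert [Finite V] (gen : ∀ v, G v) (v : V) : TildeProduct Γ G :=
  haveI : Fintype {C : Set V // IsCompOf Γ ((star Γ v)ᶜ) C} := Fintype.ofFinite _
  Finset.noncommProd (Finset.univ : Finset {C : Set V // IsCompOf Γ ((star Γ v)ᶜ) C})
    (fun c => of (tilde Γ) (fun p : TV Γ => G p.1.1) (v := ⟨(v, c.1), c.2⟩) (gen v))
    (by
      intro a _ b _ hab
      have hadj : (tilde Γ).Adj ⟨(v, a.1), a.2⟩ ⟨(v, b.1), b.2⟩ := by
        show _ ≠ _ ∧ ¬ _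
        refine ⟨fun h => hab (Subtype.ext (congrArg (fun x : TV Γ => x.1.2) h)), ?_⟩
        rintro ⟨hne, -⟩
        exact hne rfl
      exact of_commute (tilde Γ) (fun p : TV Γ => G p.1.1) hadj (gen v) (gen v))

/-- The set `Δ` of vertices adjacent to every other vertex of `Γ`. -/
def Delta (Γ : SimpleGraph V) : Set V := {v | ∀ u, u ≠ v → Γ.Adj v u}

/-- The subgroup of the graph product generated by the vertex groups `G v`, `v ∈ T`. -/
def vertexSubgroup (T : Set V) : Subgroup (GraphProduct Γ G) :=
  Subgroup.closure {x | ∃ v ∈ T, ∃ g : G v, x = of Γ G g}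

/-- `w` is a reduced word for the element `g` of the graph product: a minimal length
expression of `g` as a product of nontrivial elements of vertex groups. -/
def IsReducedWord (g : GraphProduct Γ G) (w : List (Σ v : V, G v)) : Prop :=
  (w.map fun l => of Γ G l.2).prod = g ∧ (∀ l ∈ w, l.2 ≠ 1) ∧
    ∀ w' : List (Σ v : V, G v), (w'.map fun l => of Γ G l.2).prod = g →
      w.length ≤ w'.length

/-! ### Auxiliary lemmas -/

section GraphAux

/-- A single step inside the subgraph induced on `S`. -/
def Step (Γ : SimpleGraph V) (S : Set V) (x y : V) : Prop := x ∈ S ∧ y ∈ S ∧ Γ.Adj x y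

/-- Reachability inside the subgraph induced on `S`, as a relation on `V`. -/
def Reach (Γ : SimpleGraph V) (S : Set V) : V → V → Prop :=
  Relation.ReflTransGen (Step Γ S)

lemma reach_of_walk {Γ : SimpleGraph V} {S : Set V} :
    ∀ {a b : S} (_ : (Γ.induce S).Walk a b), Reach Γ S a b := by
  intro a b w
  induction w with
  | nil => exact Relation.ReflTransGen.refl
  | @cons x y z h p ih =>
      exact Relation.ReflTransGen.head ⟨x.2, y.2, h⟩ ih

lemma reach_iff {Γ : SimpleGraph V} {S : Set V} {x y : V} (hx : x ∈ S) (hy : y ∈ S) :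
    (Γ.induce S).Reachable ⟨x, hx⟩ ⟨y, hy⟩ ↔ Reach Γ S x y := by
  constructor
  · rintro ⟨w⟩; exact reach_of_walk w
  · intro h
    induction h with
    | refl => rfl
    | @tail b c hxb hbc ih =>
        obtain ⟨hbS, hcS, hadj⟩ := hbc
        have h1 : (Γ.induce S).Reachable ⟨x, hx⟩ ⟨b, hbS⟩ := ih hbS
        exact h1.trans (SimpleGraph.Adj.reachable (by exact hadj))

lemma IsCompOf.subset {Γ : SimpleGraph V} {S C : Set V} (h : IsCompOf Γ S C) : C ⊆ S := by
  obtain ⟨c, rfl⟩ := h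
  rintro x ⟨⟨x', hx'⟩, -, rfl⟩
  exact hx'

lemma IsCompOf.mem_of_adj {Γ : SimpleGraph V} {S C : Set V} (h : IsCompOf Γ S C)
    {x y : V} (hx : x ∈ C) (hy : y ∈ S) (hadj : Γ.Adj y x) : y ∈ C := by
  obtain ⟨c, rfl⟩ := h
  obtain ⟨⟨x, hxS⟩, hxc, rfl⟩ := hx
  refine ⟨⟨y, hy⟩, ?_, rfl⟩
  rw [SimpleGraph.ConnectedComponent.mem_supp_iff] at hxc ⊢
  rw [← hxc]
  exact SimpleGraph.ConnectedComponent.sound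
    (SimpleGraph.Adj.reachable (show (Γ.induce S).Adj ⟨y, hy⟩ ⟨x, hxS⟩ from hadj))

lemma IsCompOf.eq_of_mem {Γ : SimpleGraph V} {S C D : Set V} (hC : IsCompOf Γ S C)
    (hD : IsCompOf Γ S D) {x : V} (hxC : x ∈ C) (hxD : x ∈ D) : C = D := by
  obtain ⟨c, rfl⟩ := hC
  obtain ⟨d, rfl⟩ := hD
  obtain ⟨⟨x, hxS⟩, hxc, rfl⟩ := hxC
  obtain ⟨⟨x', hx'S⟩, hxd, hval⟩ := hxD
  obtain rfl : x' = x := hval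
  rw [SimpleGraph.ConnectedComponent.mem_supp_iff] at hxc hxd
  rw [← hxc, ← hxd]

lemma extract_chain {α : Type*} (r : α → α → Prop) (T : Set α) {x u : α}
    (h : Relation.ReflTransGen r x u) (hu : u ∉ T) :
    Relation.ReflTransGen (fun a b => r a b ∧ a ∉ T ∧ b ∉ T) x u ∨
      ∃ z ∈ T, ∃ y, r z y ∧ y ∉ T ∧
        Relation.ReflTransGen (fun a b => r a b ∧ a ∉ T ∧ b ∉ T) y u := by
  induction h using Relation.ReflTransGen.head_induction_on with
  | refl => exact Or.inl Relation.ReflTransGen.refl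
  | @head a b hab hbu ih =>
      by_cases hbT : b ∈ T
      · rcases ih with h' | h'
        · rcases (Relation.ReflTransGen.cases_head h') with rfl | ⟨c, hbc, _⟩
          · exact absurd hbT hu
          · exact absurd hbc.2.1 (not_not_intro hbT)
        · exact Or.inr h'
      · rcases ih with h' | h'
        · by_cases haT : a ∈ T
          · exact Or.inr ⟨a, haT, b, hab, hbT, h'⟩
          · exact Or.inl (Relation.ReflTransGen.head ⟨hab, haT, hbT⟩ h')
        · exact Or.inr h'

lemma not_mem_star_of_ne_of_not_adj {Γ : SimpleGraph V} {v w : V} (hvw : v ≠ w)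
    (hadj : ¬ Γ.Adj v w) : w ∉ star Γ v := by
  intro h
  rcases Set.mem_insert_iff.mp h with rfl | h'
  · exact hvw rfl
  · exact hadj h'

/-- If `w ∉ C` and `w ∉ st(v)` then no vertex of `C` lies in `st(w)`. -/
lemma comp_avoids_star {Γ : SimpleGraph V} {v w : V} {C : Set V}
    (hC : IsCompOf Γ ((star Γ v)ᶜ) C)
    (hwSv : w ∉ star Γ v) (hwC : w ∉ C) {x : V} (hx : x ∈ C) : x ∉ star Γ w := by
  intro hmem
  rcases Set.mem_insert_iff.mp hmem with rfl | hwx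
  · exact hwC hx
  · exact hwC (hC.mem_of_adj hx hwSv hwx)

lemma noSIL_disjoint {Γ : SimpleGraph V} (hsil : ¬ HasSIL Γ) {v w : V} {C D : Set V}
    (hvw : v ≠ w)
    (hadj : ¬ Γ.Adj v w) (hC : IsCompOf Γ ((star Γ v)ᶜ) C)
    (hD : IsCompOf Γ ((star Γ w)ᶜ) D) (hwC : w ∉ C) (hvD : v ∉ D)
    {u : V} (huC : u ∈ C) (huD : u ∈ D) : False := by
  set L : Set V := Γ.neighborSet v ∩ Γ.neighborSet w with hLdef
  have hLv : (star Γ v)ᶜ ⊆ Lᶜ :=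
    Set.compl_subset_compl.mpr (fun x hx => Set.mem_insert_iff.mpr (Or.inr hx.1))
  have hLw : (star Γ w)ᶜ ⊆ Lᶜ :=
    Set.compl_subset_compl.mpr (fun x hx => Set.mem_insert_iff.mpr (Or.inr hx.2))
  have hwSv : w ∉ star Γ v := not_mem_star_of_ne_of_not_adj hvw hadj
  have hvSw : v ∉ star Γ w :=
    not_mem_star_of_ne_of_not_adj (Ne.symm hvw) (fun h => hadj h.symm)
  have hCw : ∀ x ∈ C, x ∉ star Γ w := fun x hx => comp_avoids_star hC hwSv hwC hx
  have hDv : ∀ x ∈ D, x ∉ star Γ v := fun x hx => comp_avoids_star hD hvSw hvD hx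
  have claimB : ∀ x y, y ∈ C → y ∈ D → Step Γ Lᶜ x y →
      (x ∈ C ∧ x ∈ D) ∨ x = v ∨ x = w := by
    rintro x y hyC hyD ⟨hxL, hyL, hxy⟩
    by_cases hxv : x ∈ star Γ v
    · rcases Set.mem_insert_iff.mp hxv with rfl | hvx
      · exact Or.inr (Or.inl rfl)
      · have hxw : x ∉ star Γ w := by
          intro hmem
          rcases Set.mem_insert_iff.mp hmem with rfl | hwx
          · exact hadj hvx
          · exact hxL ⟨hvx, hwx⟩
        have hxD : x ∈ D := hD.mem_of_adj hyD hxw hxy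
        exact absurd hxv (hDv x hxD)
    · by_cases hxw : x ∈ star Γ w
      · rcases Set.mem_insert_iff.mp hxw with rfl | hwx
        · exact Or.inr (Or.inr rfl)
        · have hxC : x ∈ C := hC.mem_of_adj hyC hxv hxy
          exact absurd hxw (hCw x hxC)
      · exact Or.inl ⟨hC.mem_of_adj hyC hxv hxy, hD.mem_of_adj hyD hxw hxy⟩
  have huT : u ∉ ({v, w} : Set V) := by
    intro h
    rcases h with rfl | h
    · exact (hC.subset huC) (Set.mem_insert _ _)
    · rw [Set.mem_singleton_iff] at h; subst h
      exact hwC huC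
  have key : ∀ z, z ∈ ({v, w} : Set V) → Reach Γ Lᶜ z u → False := by
    intro z hzT hz
    rcases extract_chain _ ({v, w} : Set V) hz huT with h' | ⟨z', hz'T, y, hstep, hyT, hchain⟩
    · rcases Relation.ReflTransGen.cases_head h' with rfl | ⟨c, hzc, _⟩
      · exact huT hzT
      · exact hzc.2.1 hzT
    · have hyCD : y ∈ C ∧ y ∈ D := by
        clear hstep hyT
        induction hchain using Relation.ReflTransGen.head_induction_on with
        | refl => exact ⟨huC, huD⟩
        | @head a b hab hbu ih =>
            rcases claimB a b ih.1 ih.2 hab.1 with h | h | h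
            · exact h
            · exact absurd (h ▸ Set.mem_insert _ _) hab.2.1
            · exact absurd (h ▸ Set.mem_insert_iff.mpr (Or.inr rfl)) hab.2.1
      rw [Set.mem_insert_iff, Set.mem_singleton_iff] at hz'T
      rcases hz'T with rfl | rfl
      · exact (hC.subset hyCD.1) (Set.mem_insert_iff.mpr (Or.inr hstep.2.2))
      · exact (hD.subset hyCD.2) (Set.mem_insert_iff.mpr (Or.inr hstep.2.2))
  have huL : u ∈ Lᶜ := hLv (hC.subset huC)
  refine hsil ⟨v, w, hvw, hadj, Subtype.val ''
    ((Γ.induce Lᶜ).connectedComponentMk ⟨u, huL⟩).supp, ⟨_, rfl⟩, ?_, ?_⟩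
  · rintro ⟨⟨v', hv'L⟩, hsupp, h⟩
    obtain rfl : v' = v := h
    rw [SimpleGraph.ConnectedComponent.mem_supp_iff, SimpleGraph.ConnectedComponent.eq] at hsupp
    exact key _ (Set.mem_insert _ _) ((reach_iff hv'L huL).mp hsupp)
  · rintro ⟨⟨w', hw'L⟩, hsupp, h⟩
    obtain rfl : w' = w := h
    rw [SimpleGraph.ConnectedComponent.mem_supp_iff, SimpleGraph.ConnectedComponent.eq] at hsupp
    exact key _ (Set.mem_insert_iff.mpr (Or.inr rfl)) ((reach_iff hw'L huL).mp hsupp)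

lemma noSIL_subset {Γ : SimpleGraph V} (hsil : ¬ HasSIL Γ) {v w : V} {C D : Set V}
    (hvw : v ≠ w)
    (hadj : ¬ Γ.Adj v w) (hC : IsCompOf Γ ((star Γ v)ᶜ) C)
    (hD : IsCompOf Γ ((star Γ w)ᶜ) D) (hwC : w ∉ C) (hvD : v ∈ D) : C ⊆ D := by
  intro u huC
  by_contra huD
  have hwSv : w ∉ star Γ v := not_mem_star_of_ne_of_not_adj hvw hadj
  have huSw : u ∉ star Γ w := comp_avoids_star hC hwSv hwC huC
  set D' : Set V :=
    Subtype.val '' ((Γ.induce (star Γ w)ᶜ).connectedComponentMk ⟨u, huSw⟩).supp with hD'def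
  have hD' : IsCompOf Γ ((star Γ w)ᶜ) D' := ⟨_, rfl⟩
  have huD' : u ∈ D' := ⟨_, rfl, rfl⟩
  have hvD' : v ∉ D' := by
    intro hv
    exact huD ((hD'.eq_of_mem hD hv hvD) ▸ huD')
  exact noSIL_disjoint hsil hvw hadj hC hD' hwC hvD' huC huD'

end GraphAux

section AlgAux

variable {Γ : SimpleGraph V} {G : V → Type uG} [∀ v, Group (G v)]

lemma closure_of_eq_top :
    Subgroup.closure {x : GraphProduct Γ G | ∃ (v : V) (g : G v), x = of Γ G g} = ⊤ := by
  rw [eq_top_iff]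
  rintro x -
  obtain ⟨y, rfl⟩ := QuotientGroup.mk'_surjective (Subgroup.normalClosure (rels Γ G)) x
  induction y using Monoid.CoprodI.induction_on with
  | one => exact one_mem _
  | of i m => exact Subgroup.subset_closure ⟨i, m, rfl⟩
  | mul x y hx hy => rw [map_mul]; exact mul_mem hx hy

lemma mulAut_ext {π σ : MulAut (GraphProduct Γ G)}
    (h : ∀ (v : V) (g : G v), π (of Γ G g) = σ (of Γ G g)) : π = σ := by
  apply MulEquiv.ext
  intro x
  have hx : x ∈ Subgroup.closure
      {x : GraphProduct Γ G | ∃ (v : V) (g : G v), x = of Γ G g} := by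
    rw [closure_of_eq_top]; exact Subgroup.mem_top x
  refine Subgroup.closure_induction ?_ ?_ ?_ ?_ hx
  · rintro y ⟨v, g, rfl⟩; exact h v g
  · simp
  · intro a b _ _ ha hb; rw [map_mul, map_mul, ha, hb]
  · intro a _ ha; rw [map_inv, map_inv, ha]

lemma IsPartialConjBy.apply_inv {v : V} {a : G v} {π : MulAut (GraphProduct Γ G)}
    {C : Set V} (h : IsPartialConjBy Γ G a π C) (hvC : v ∉ C) :
    (∀ u, u ∈ C → ∀ g : G u,
        π⁻¹ (of Γ G g) = (of Γ G a)⁻¹ * of Γ G g * of Γ G a) ∧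
    (∀ u, u ∉ C → ∀ g : G u, π⁻¹ (of Γ G g) = of Γ G g) := by
  have hA : π (of Γ G a) = of Γ G a := h.2 v hvC a
  constructor
  · intro u hu g
    rw [MulAut.inv_def, MulEquiv.symm_apply_eq]
    rw [map_mul, map_mul, map_inv, hA, h.1 u hu g]
    group
  · intro u hu g
    rw [MulAut.inv_def, MulEquiv.symm_apply_eq, h.2 u hu g]

lemma IsPartialConjBy.zpow_apply {v : V} {a : G v} {π : MulAut (GraphProduct Γ G)}
    {C : Set V} (h : IsPartialConjBy Γ G a π C) (hvC : v ∉ C) (n : ℤ) :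
    (∀ u, u ∈ C → ∀ g : G u,
        (π ^ n) (of Γ G g) = (of Γ G a) ^ n * of Γ G g * ((of Γ G a) ^ n)⁻¹) ∧
    (∀ u, u ∉ C → ∀ g : G u, (π ^ n) (of Γ G g) = of Γ G g) := by
  induction n using Int.induction_on with
  | zero => simp
  | succ i ih =>
      have hstep : (π ^ ((i : ℤ) + 1)) = π ^ (i : ℤ) * π := zpow_add_one π i
      constructor
      · intro u hu g
        rw [hstep, MulAut.mul_apply, h.1 u hu g, map_mul, map_mul, map_inv,
          ih.2 v hvC a, ih.1 u hu g]
        group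
      · intro u hu g
        rw [hstep, MulAut.mul_apply, h.2 u hu g, ih.2 u hu g]
  | pred i ih =>
      have hstep : (π ^ (-(i : ℤ) - 1)) = π ^ (-(i : ℤ)) * π⁻¹ := zpow_sub_one π (-i)
      have hinv := h.apply_inv hvC
      constructor
      · intro u hu g
        rw [hstep, MulAut.mul_apply, hinv.1 u hu g, map_mul, map_mul, map_inv,
          ih.2 v hvC a, ih.1 u hu g]
        group
      · intro u hu g
        rw [hstep, MulAut.mul_apply, hinv.2 u hu g, ih.2 u hu g]

lemma IsPartialConjBy.zpow_eq_one {v : V} {a : G v} {π : MulAut (GraphProduct Γ G)}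
    {C : Set V} (h : IsPartialConjBy Γ G a π C) (hvC : v ∉ C) {n : ℤ}
    (hn : a ^ n = 1) : π ^ n = 1 := by
  have hA : (of Γ G a) ^ n = 1 := by rw [← map_zpow, hn, map_one]
  apply mulAut_ext
  intro u g
  by_cases hu : u ∈ C
  · rw [(h.zpow_apply hvC n).1 u hu g, hA]; simp
  · rw [(h.zpow_apply hvC n).2 u hu g]; simp

lemma IsPartialConjBy.commute_disjoint {v w : V} {a : G v} {b : G w}
    {π σ : MulAut (GraphProduct Γ G)} {C D : Set V}
    (hπ : IsPartialConjBy Γ G a π C) (hσ : IsPartialConjBy Γ G b σ D)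
    (hdis : ∀ x, x ∈ C → x ∉ D) (hvD : v ∉ D) (hwC : w ∉ C) : Commute π σ := by
  show π * σ = σ * π
  apply mulAut_ext
  intro u g
  rw [MulAut.mul_apply, MulAut.mul_apply]
  by_cases huC : u ∈ C
  · have huD := hdis u huC
    rw [hσ.2 u huD g, hπ.1 u huC g, map_mul, map_mul, map_inv, hσ.2 v hvD a,
      hσ.2 u huD g]
  · by_cases huD : u ∈ D
    · rw [hπ.2 u huC g, hσ.1 u huD g, map_mul, map_mul, map_inv, hπ.2 w hwC b,
        hπ.2 u huC g]
    · rw [hσ.2 u huD g, hπ.2 u huC g, hσ.2 u huD g]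

lemma IsPartialConjBy.commute_subset {v w : V} {a : G v} {b : G w}
    {π σ : MulAut (GraphProduct Γ G)} {C D : Set V}
    (hπ : IsPartialConjBy Γ G a π C) (hσ : IsPartialConjBy Γ G b σ D)
    (hsub : C ⊆ D) (hwC : w ∉ C) (hvD : v ∈ D) : Commute π σ := by
  show π * σ = σ * π
  apply mulAut_ext
  intro u g
  rw [MulAut.mul_apply, MulAut.mul_apply]
  by_cases huC : u ∈ C
  · have huD : u ∈ D := hsub huC
    have hL : π (σ (of Γ G g)) =
        of Γ G b * (of Γ G a * of Γ G g * (of Γ G a)⁻¹) * (of Γ G b)⁻¹ := by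
      rw [hσ.1 u huD g, map_mul, map_mul, map_inv, hπ.2 w hwC b, hπ.1 u huC g]
    have hR : σ (π (of Γ G g)) =
        (of Γ G b * of Γ G a * (of Γ G b)⁻¹) * (of Γ G b * of Γ G g * (of Γ G b)⁻¹) *
          (of Γ G b * of Γ G a * (of Γ G b)⁻¹)⁻¹ := by
      rw [hπ.1 u huC g, map_mul, map_mul, map_inv, hσ.1 v hvD a, hσ.1 u huD g]
    rw [hL, hR]
    group
  · by_cases huD : u ∈ D
    · rw [hσ.1 u huD g, map_mul, map_mul, map_inv, hπ.2 w hwC b, hπ.2 u huC g,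
        hσ.1 u huD g]
    · rw [hσ.2 u huD g, hπ.2 u huC g, hσ.2 u huD g]

lemma IsPartialConjBy.commute_adj {v w : V} {a : G v} {b : G w}
    {π σ : MulAut (GraphProduct Γ G)} {C D : Set V}
    (hπ : IsPartialConjBy Γ G a π C) (hσ : IsPartialConjBy Γ G b σ D)
    (hcomm : Commute (of Γ G a) (of Γ G b)) (hvD : v ∉ D) (hwC : w ∉ C) :
    Commute π σ := by
  show π * σ = σ * π
  apply mulAut_ext
  intro u g
  rw [MulAut.mul_apply, MulAut.mul_apply]
  by_cases huC : u ∈ C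
  · by_cases huD : u ∈ D
    · have hL : π (σ (of Γ G g)) =
          of Γ G b * (of Γ G a * of Γ G g * (of Γ G a)⁻¹) * (of Γ G b)⁻¹ := by
        rw [hσ.1 u huD g, map_mul, map_mul, map_inv, hπ.2 w hwC b, hπ.1 u huC g]
      have hR : σ (π (of Γ G g)) =
          of Γ G a * (of Γ G b * of Γ G g * (of Γ G b)⁻¹) * (of Γ G a)⁻¹ := by
        rw [hπ.1 u huC g, map_mul, map_mul, map_inv, hσ.2 v hvD a, hσ.1 u huD g]
      rw [hL, hR]
      calc of Γ G b * (of Γ G a * of Γ G g * (of Γ G a)⁻¹) * (of Γ G b)⁻¹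
          = (of Γ G b * of Γ G a) * of Γ G g * (of Γ G b * of Γ G a)⁻¹ := by group
        _ = (of Γ G a * of Γ G b) * of Γ G g * (of Γ G a * of Γ G b)⁻¹ := by
            rw [hcomm.eq]
        _ = of Γ G a * (of Γ G b * of Γ G g * (of Γ G b)⁻¹) * (of Γ G a)⁻¹ := by group
    · rw [hσ.2 u huD g, hπ.1 u huC g, map_mul, map_mul, map_inv, hσ.2 v hvD a,
        hσ.2 u huD g]
  · by_cases huD : u ∈ D
    · rw [hσ.1 u huD g, map_mul, map_mul, map_inv, hπ.2 w hwC b, hπ.2 u huC g,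
        hσ.1 u huD g]
    · rw [hσ.2 u huD g, hπ.2 u huC g, hσ.2 u huD g]

end AlgAux

section GenAux

variable {K : Type*} {H : Type*} [Group K] [Group H]

noncomputable def genExp (k : K) (hk : Subgroup.zpowers k = ⊤) (g : K) : ℤ :=
  (Subgroup.mem_zpowers_iff.mp (by rw [hk]; exact Subgroup.mem_top g)).choose

lemma genExp_spec (k : K) (hk : Subgroup.zpowers k = ⊤) (g : K) :
    k ^ genExp k hk g = g :=
  (Subgroup.mem_zpowers_iff.mp (by rw [hk]; exact Subgroup.mem_top g)).choose_spec

lemma gen_pow_congr (k : K) (h : H) (hcond : ∀ n : ℤ, k ^ n = 1 → h ^ n = 1)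
    {m n : ℤ} (hmn : k ^ m = k ^ n) : h ^ m = h ^ n := by
  have h1 : k ^ (m - n) = 1 := by rw [zpow_sub, hmn, mul_inv_cancel]
  have h2 := hcond _ h1
  rw [zpow_sub] at h2
  exact mul_inv_eq_one.mp h2

noncomputable def genHom (k : K) (hk : Subgroup.zpowers k = ⊤) (h : H)
    (hcond : ∀ n : ℤ, k ^ n = 1 → h ^ n = 1) : K →* H where
  toFun g := h ^ genExp k hk g
  map_one' := by
    have := gen_pow_congr k h hcond (m := genExp k hk 1) (n := 0)
      (by rw [genExp_spec]; simp)
    simpa using this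
  map_mul' g₁ g₂ := by
    have := gen_pow_congr k h hcond
      (m := genExp k hk (g₁ * g₂)) (n := genExp k hk g₁ + genExp k hk g₂)
      (by rw [zpow_add, genExp_spec, genExp_spec, genExp_spec])
    show h ^ genExp k hk (g₁ * g₂) = h ^ genExp k hk g₁ * h ^ genExp k hk g₂
    rw [this, zpow_add]

lemma genHom_apply_gen (k : K) (hk : Subgroup.zpowers k = ⊤) (h : H)
    (hcond : ∀ n : ℤ, k ^ n = 1 → h ^ n = 1) : genHom k hk h hcond k = h := by
  show h ^ genExp k hk k = h
  have := gen_pow_congr k h hcond (m := genExp k hk k) (n := 1)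
    (by rw [genExp_spec]; simp)
  simpa using this

lemma genHom_mem_zpowers (k : K) (hk : Subgroup.zpowers k = ⊤) (h : H)
    (hcond : ∀ n : ℤ, k ^ n = 1 → h ^ n = 1) (g : K) :
    genHom k hk h hcond g ∈ Subgroup.zpowers h :=
  Subgroup.mem_zpowers_iff.mpr ⟨genExp k hk g, rfl⟩

end GenAux

/-- If `Γ` has no SIL, the assignment `p_{v,C} ↦ π_{v,C}` extends to a
surjective group homomorphism `φ : G_{Γ̃} → Aut^pc(G_Γ)`. -/
theorem phi_surjective {V : Type u} [Finite V] (Γ : SimpleGraph V) (hsil : ¬ HasSIL Γ)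
    (G : V → Type uG) [∀ v, Group (G v)] [∀ v, Nontrivial (G v)]
    (gen : ∀ v, G v) (hgen : ∀ v, Subgroup.zpowers (gen v) = ⊤)
    (πfam : TV Γ → MulAut (GraphProduct Γ G))
    (hπ : ∀ p : TV Γ, IsPartialConj Γ G gen (πfam p) p.1.1 p.1.2) :
    ∃ φ : TildeProduct Γ G →* MulAut (GraphProduct Γ G),
      (∀ p : TV Γ,
        φ (of (tilde Γ) (fun q : TV Γ => G q.1.1) (v := p) (gen p.1.1)) = πfam p) ∧
      φ.range = Subgroup.closure (Set.range πfam) := by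
  classical
  have hπ' : ∀ p : TV Γ, IsPartialConjBy Γ G (gen p.1.1) (πfam p) p.1.2 := hπ
  have hvC : ∀ p : TV Γ, p.1.1 ∉ p.1.2 := fun p h => (p.2.subset h) (Set.mem_insert _ _)
  have hcond : ∀ p : TV Γ, ∀ n : ℤ, gen p.1.1 ^ n = 1 → πfam p ^ n = 1 :=
    fun p n hn => (hπ' p).zpow_eq_one (hvC p) hn
  let f : ∀ p : TV Γ, G p.1.1 →* MulAut (GraphProduct Γ G) :=
    fun p => genHom (gen p.1.1) (hgen p.1.1) (πfam p) (hcond p)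
  have hcomm : ∀ p q : TV Γ, (tilde Γ).Adj p q → Commute (πfam p) (πfam q) := by
    rintro ⟨⟨v, C⟩, hpC⟩ ⟨⟨w, D⟩, hqD⟩ hadjpq
    obtain ⟨hne, hcondadj⟩ := (hadjpq : _ ≠ _ ∧ ¬ _)
    have hπp := hπ' ⟨(v, C), hpC⟩
    have hπq := hπ' ⟨(w, D), hqD⟩
    by_cases hvw : v = w
    · subst hvw
      have hCD : C ≠ D := by
        intro h
        exact hne (Subtype.ext (congrArg (Prod.mk v) h))
      have hvD : v ∉ D := fun h => (hqD.subset h) (Set.mem_insert _ _)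
      have hwC : v ∉ C := fun h => (hpC.subset h) (Set.mem_insert _ _)
      exact hπp.commute_disjoint hπq
        (fun x hxC hxD => hCD (hpC.eq_of_mem hqD hxC hxD)) hvD hwC
    · by_cases hadjvw : Γ.Adj v w
      · have hvD : v ∉ D := fun h =>
          (hqD.subset h) (Set.mem_insert_iff.mpr (Or.inr hadjvw.symm))
        have hwC : w ∉ C := fun h =>
          (hpC.subset h) (Set.mem_insert_iff.mpr (Or.inr hadjvw))
        exact hπp.commute_adj hπq (of_commute Γ G hadjvw (gen v) (gen w)) hvD hwC
      · have hnot : ¬ (v ∈ D ∧ w ∈ C) := fun hc => hcondadj ⟨hvw, hadjvw, hc.1, hc.2⟩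
        by_cases hvD : v ∈ D
        · have hwC : w ∉ C := fun h => hnot ⟨hvD, h⟩
          exact hπp.commute_subset hπq
            (noSIL_subset hsil hvw hadjvw hpC hqD hwC hvD) hwC hvD
        · by_cases hwC : w ∈ C
          · exact (hπq.commute_subset hπp
              (noSIL_subset hsil (Ne.symm hvw) (fun h => hadjvw h.symm) hqD hpC hvD hwC)
              hvD hwC).symm
          · exact hπp.commute_disjoint hπq
              (fun x hxC hxD => noSIL_disjoint hsil hvw hadjvw hpC hqD hwC hvD hxC hxD)
              hvD hwC
  let F : Monoid.CoprodI (fun p : TV Γ => G p.1.1) →* MulAut (GraphProduct Γ G) :=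
    Monoid.CoprodI.lift f
  have hker : rels (tilde Γ) (fun p : TV Γ => G p.1.1) ⊆ (F.ker : Set _) := by
    rintro x ⟨p, q, hadj, g, h, rfl⟩
    have hcpq := hcomm p q hadj
    have hg : f p g ∈ Subgroup.zpowers (πfam p) := genHom_mem_zpowers _ _ _ _ g
    have hh : f q h ∈ Subgroup.zpowers (πfam q) := genHom_mem_zpowers _ _ _ _ h
    obtain ⟨m, hm⟩ := Subgroup.mem_zpowers_iff.mp hg
    obtain ⟨n, hn⟩ := Subgroup.mem_zpowers_iff.mp hh
    have hc2 : Commute (F (Monoid.CoprodI.of g)) (F (Monoid.CoprodI.of h)) := by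
      show Commute (Monoid.CoprodI.lift f (Monoid.CoprodI.of g))
        (Monoid.CoprodI.lift f (Monoid.CoprodI.of h))
      rw [Monoid.CoprodI.lift_of, Monoid.CoprodI.lift_of, ← hm, ← hn]
      exact hcpq.zpow_zpow m n
    have hmem : (Monoid.CoprodI.of (M := fun p : TV Γ => G p.1.1) g *
        Monoid.CoprodI.of (M := fun p : TV Γ => G p.1.1) h *
        (Monoid.CoprodI.of (M := fun p : TV Γ => G p.1.1) g)⁻¹ *
        (Monoid.CoprodI.of (M := fun p : TV Γ => G p.1.1) h)⁻¹) ∈ F.ker := by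
      rw [MonoidHom.mem_ker]
      simp only [map_mul, map_inv]
      rw [← commutatorElement_def]
      exact commutatorElement_eq_one_iff_commute.mpr hc2
    exact hmem
  have hnc : Subgroup.normalClosure (rels (tilde Γ) (fun p : TV Γ => G p.1.1)) ≤ F.ker :=
    Subgroup.normalClosure_le_normal hker
  refine ⟨QuotientGroup.lift _ F (fun x hx => MonoidHom.mem_ker.mp (hnc hx)), ?_, ?_⟩
  · intro p
    show f p (gen p.1.1) = πfam p
    exact genHom_apply_gen _ _ _ _
  · apply le_antisymm
    · rintro x hx
      obtain ⟨y, rfl⟩ := hx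
      have hy : y ∈ Subgroup.closure {x : TildeProduct Γ G |
          ∃ (p : TV Γ) (g : G p.1.1), x = of (tilde Γ) (fun q : TV Γ => G q.1.1) g} := by
        rw [closure_of_eq_top]; exact Subgroup.mem_top y
      refine Subgroup.closure_induction ?_ ?_ ?_ ?_ hy
      · rintro z ⟨p, g, rfl⟩
        obtain ⟨n, hn⟩ := Subgroup.mem_zpowers_iff.mp
          (genHom_mem_zpowers (gen p.1.1) (hgen p.1.1) (πfam p) (hcond p) g)
        have hmem : f p g ∈ Subgroup.closure (Set.range πfam) := by
          rw [← hn]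
          exact Subgroup.zpow_mem _ (Subgroup.subset_closure (Set.mem_range_self p)) n
        exact hmem
      · convert one_mem (Subgroup.closure (Set.range πfam)) using 1; exact map_one _
      · intro a b _ _ ha hb; convert mul_mem ha hb using 1; exact map_mul _ a b
      · intro a _ ha; convert inv_mem ha using 1; exact map_inv _ a
    · rw [Subgroup.closure_le]
      rintro x ⟨p, rfl⟩
      refine ⟨of (tilde Γ) (fun q : TV Γ => G q.1.1) (gen p.1.1), ?_⟩
      show f p (gen p.1.1) = πfam p
      exact genHom_apply_gen _ _ _ _

end ArXiv
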